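/- Let F be a field and s ∈ F with s ≠ 0 and s⁴ ≠ 1; set q = s² and for 2x ∈ ℤ define [x]_q = (s^(2x) − s^(−2x))/(s² − s⁻²). Then for all integers λ and p ≥ 0: q^(−2λ−2p+1)·[p + 1/2]_q + q^(−λ+1)·(1 + [2p]_q)·[λ + p − 1/2]_q + q^(2p+1)·[λ + p − 1/2]_q·[λ]_q = [λ + p + 1/2]_q·[λ + 2p]_q. -/

import Mathlib

private lemma aux_clear {F : Type*} [Field F] (d T1 T2 T3 N1 N2 N3 N4 N5 N6 : F)
    (hd : d ≠ 0) (h : T1 * N1 * d + T2 * (d + N2) * N3 + T3 * N3 * N4 = N5 * N6) :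
    T1 * (N1 / d) + T2 * (1 + N2 / d) * (N3 / d) + T3 * (N3 / d) * (N4 / d)
      = N5 / d * (N6 / d) := by
  have hu : d * d⁻¹ = 1 := mul_inv_cancel₀ hd
  linear_combination d⁻¹ ^ 2 * h - d⁻¹ * (T1 * N1 + T2 * N3) * hu

/-- Half-integer q-number: `hqint s m` represents `[m/2]_q` where `q = s ^ 2`. -/
noncomputable def hqint {F : Type*} [Field F] (s : F) (m : ℤ) : F :=
  (s ^ m - s ^ (-m)) / (s ^ (2 : ℤ) - s ^ (-2 : ℤ))

theorem singular_leading_coeff_oddP {F : Type*} [Field F] (s : F)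
    (hs : s ≠ 0) (hs4 : s ^ 4 ≠ 1) (lam p : ℤ) (hp : 0 ≤ p) :
    (s ^ (2 : ℤ)) ^ (-2 * lam - 2 * p + 1) * hqint s (2 * p + 1)
      + (s ^ (2 : ℤ)) ^ (-lam + 1) * (1 + hqint s (2 * (2 * p))) * hqint s (2 * lam + 2 * p - 1)
      + (s ^ (2 : ℤ)) ^ (2 * p + 1) * hqint s (2 * lam + 2 * p - 1) * hqint s (2 * lam)
      = hqint s (2 * lam + 2 * p + 1) * hqint s (2 * lam + 2 * (2 * p)) := by
  unfold hqint
  have hden2 : s ^ (2:ℤ) - s ^ (-2:ℤ) = (s ^ 4 - 1) / s ^ 2 := by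
    rw [zpow_neg, zpow_ofNat, eq_div_iff (pow_ne_zero 2 hs), sub_mul,
      inv_mul_cancel₀ (pow_ne_zero 2 hs), ← pow_add]
  have ha : s ^ lam ≠ 0 := zpow_ne_zero _ hs
  have hb : s ^ p ≠ 0 := zpow_ne_zero _ hs
  have hd : s ^ 4 - 1 ≠ 0 := sub_ne_zero.mpr hs4
  have e : ∀ a b c : ℤ, s ^ (lam * a + p * b + c) = (s ^ lam) ^ a * (s ^ p) ^ b * s ^ c := by
    intro a b c
    rw [zpow_add₀ hs, zpow_add₀ hs, zpow_mul, zpow_mul]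
  rw [show ((s^(2:ℤ))^(-2*lam-2*p+1) : F) = (s^lam)^(-4:ℤ) * (s^p)^(-4:ℤ) * s^(2:ℤ) by
      rw [← zpow_mul, show ((2:ℤ)*(-2*lam-2*p+1)) = lam*(-4)+p*(-4)+2 by ring, e],
    show ((s^(2:ℤ))^(-lam+1) : F) = (s^lam)^(-2:ℤ) * s^(2:ℤ) by
      rw [← zpow_mul, show ((2:ℤ)*(-lam+1)) = lam*(-2)+p*0+2 by ring, e]; simp,
    show ((s^(2:ℤ))^(2*p+1) : F) = (s^p)^(4:ℤ) * s^(2:ℤ) by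
      rw [← zpow_mul, show ((2:ℤ)*(2*p+1)) = lam*0+p*4+2 by ring, e]; simp]
  rw [show (2*lam+2*p-1:ℤ) = lam*2+p*2+(-1) by ring, show (-(lam*2+p*2+(-1)):ℤ) = lam*(-2)+p*(-2)+1 by ring,
    show (2*lam+2*p+1:ℤ) = lam*2+p*2+1 by ring, show (-(lam*2+p*2+1):ℤ) = lam*(-2)+p*(-2)+(-1) by ring,
    show (2*lam+2*(2*p):ℤ) = lam*2+p*4+0 by ring, show (-(lam*2+p*4+0):ℤ) = lam*(-2)+p*(-4)+0 by ring,
    show (2*(2*p):ℤ) = lam*0+p*4+0 by ring, show (-(lam*0+p*4+0):ℤ) = lam*0+p*(-4)+0 by ring,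
    show (2*lam:ℤ) = lam*2+p*0+0 by ring, show (-(lam*2+p*0+0):ℤ) = lam*(-2)+p*0+0 by ring,
    show (2*p+1:ℤ) = lam*0+p*2+1 by ring, show (-(lam*0+p*2+1):ℤ) = lam*0+p*(-2)+(-1) by ring]
  simp only [e, zpow_zero, zpow_one, one_mul, mul_one, zpow_neg, zpow_ofNat]
  have hden3 : s ^ 2 - (s ^ 2 : F)⁻¹ = (s ^ 4 - 1) / s ^ 2 := by
    rw [eq_div_iff (pow_ne_zero 2 hs), sub_mul, inv_mul_cancel₀ (pow_ne_zero 2 hs), ← pow_add]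
  rw [hden3]
  set a := s ^ lam
  set b := s ^ p
  have hdne : ((s ^ 4 - 1) / s ^ 2 : F) ≠ 0 := div_ne_zero hd (pow_ne_zero 2 hs)
  apply aux_clear _ _ _ _ _ _ _ _ _ _ hdne
  field_simp [ha, hb, hs]
  have hY : (a ^ 4 * b ^ 4 * (b ^ 2 * s) * s ^ 2 * (a ^ 2 * (s ^ 2 * b ^ 4) * (s * (a ^ 2 * b ^ 2))) : F) ≠ 0 := by
    apply_rules [mul_ne_zero, pow_ne_zero]
  ring
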